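/- For all x1, x2, x3 ∈ ℂ, the characteristic polynomial of the matrix X = x1·X1 + x2·X2 + x3·X3 is T³·(T − 2(x1 + x2)); in particular the eigenvalues of X are 0 and 2(x1 + x2). -/

import Mathlib

open Matrix

noncomputable section

def X1 (α β : ℂ) : Matrix (Fin 4) (Fin 4) ℂ :=
  !![1,1,0,1; 1,1,0,0; α,β,0,0; 0,0,0,0]

def X2 (α β : ℂ) : Matrix (Fin 4) (Fin 4) ℂ :=
  !![1,1,0,0; 1,1,0,1; β-1,α+1,0,0; 0,0,0,0]

def X3 : Matrix (Fin 4) (Fin 4) ℂ :=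
  !![0,0,0,0; 0,0,0,0; 0,0,0,1; 0,0,0,0]

/-- The ℂ-linear span of {X1, X2, X3}. -/
def h (α β : ℂ) : Submodule ℂ (Matrix (Fin 4) (Fin 4) ℂ) :=
  Submodule.span ℂ {X1 α β, X2 α β, X3}

open Polynomial in
/-- A complex number is in the spectrum of a matrix iff it is a root of the
characteristic polynomial. -/
lemma mem_spectrum_iff_root_charpoly (M : Matrix (Fin 4) (Fin 4) ℂ) (x : ℂ) :
    x ∈ spectrum ℂ M ↔ M.charpoly.eval x = 0 := by
  rw [spectrum.mem_iff, Matrix.isUnit_iff_isUnit_det, isUnit_iff_ne_zero, not_not,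
    Matrix.charpoly, ← Polynomial.coe_evalRingHom, RingHom.map_det]
  have : (RingHom.mapMatrix (evalRingHom x)) (charmatrix M)
      = (algebraMap ℂ (Matrix (Fin 4) (Fin 4) ℂ)) x - M := by
    ext i j
    by_cases hij : i = j <;>
      simp [hij, charmatrix_apply, Matrix.algebraMap_matrix_apply, Matrix.one_apply]
  rw [this]

open Polynomial in
/-- The characteristic polynomial of X = x1·X1 + x2·X2 + x3·X3 is T³·(T − 2(x1+x2));
in particular the eigenvalues of X are 0 and 2(x1+x2). -/
theorem charpoly_formula (α β : ℂ) (hαβ : α + β ≠ 0) (x1 x2 x3 : ℂ) :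
    (x1 • X1 α β + x2 • X2 α β + x3 • X3).charpoly
      = X ^ 3 * (X - C (2 * (x1 + x2))) ∧
    spectrum ℂ (x1 • X1 α β + x2 • X2 α β + x3 • X3) = {0, 2 * (x1 + x2)} := by
  have hcp : (x1 • X1 α β + x2 • X2 α β + x3 • X3).charpoly
      = X ^ 3 * (X - C (2 * (x1 + x2))) := by
    have hM : x1 • X1 α β + x2 • X2 α β + x3 • X3 =
        !![x1+x2, x1+x2, 0, x1;
           x1+x2, x1+x2, 0, x2;
           x1*α+x2*(β-1), x1*β+x2*(α+1), 0, x3;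
           0,0,0,0] := by
      simp [X1, X2, X3]
    rw [hM, Matrix.charpoly]
    rw [Matrix.det_succ_row_zero]
    simp [Fin.sum_univ_succ, Matrix.det_fin_three, charmatrix_apply, map_ofNat,
      show (Fin.succAbove 1 2 : Fin 4) = 3 by decide, show (Fin.succAbove 3 2 : Fin 4) = 2 by decide]
    ring
  refine ⟨hcp, ?_⟩
  ext x
  rw [mem_spectrum_iff_root_charpoly, hcp]
  simp [sub_eq_zero, pow_eq_zero_iff, or_comm]
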